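/- Let A and B be n×n real symmetric matrices. If B − A is positive semidefinite, then F(A) ≤ F(B); if moreover B − A is positive definite, then F(A) < F(B). -/

import Mathlib

open Matrix Finset Submodule Module

namespace FopAux

variable {n : ℕ}


lemma dot_self_pos {x : Fin n → ℝ} (hx : x ≠ 0) : 0 < x ⬝ᵥ x := by
  obtain ⟨i, hi⟩ := Function.ne_iff.1 hx
  exact Finset.sum_pos' (fun i _ => mul_self_nonneg _)
    ⟨i, Finset.mem_univ i, mul_self_pos.2 hi⟩

lemma dot_sum_left {ι : Type*} (s : Finset ι) (f : ι → Fin n → ℝ) (y : Fin n → ℝ) :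
    (∑ j ∈ s, f j) ⬝ᵥ y = ∑ j ∈ s, f j ⬝ᵥ y := by
  simp only [dotProduct, Finset.sum_apply, Finset.sum_mul]
  exact Finset.sum_comm

lemma dot_sum_right {ι : Type*} (s : Finset ι) (x : Fin n → ℝ) (f : ι → Fin n → ℝ) :
    x ⬝ᵥ (∑ j ∈ s, f j) = ∑ j ∈ s, x ⬝ᵥ f j := by
  simp only [dotProduct, Finset.sum_apply, Finset.mul_sum]
  exact Finset.sum_comm

lemma mulVec_sum {ι : Type*} (M : Matrix (Fin n) (Fin n) ℝ) (s : Finset ι)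
    (f : ι → Fin n → ℝ) : M *ᵥ (∑ j ∈ s, f j) = ∑ j ∈ s, M *ᵥ f j := by
  simp only [← Matrix.mulVecLin_apply]
  exact map_sum M.mulVecLin f s

lemma dot_sum_sum (w : Fin n → (Fin n → ℝ))
    (hw : ∀ i j, w i ⬝ᵥ w j = if i = j then (1:ℝ) else 0)
    (s : Finset (Fin n)) (f g : Fin n → ℝ) :
    (∑ j ∈ s, f j • w j) ⬝ᵥ (∑ j ∈ s, g j • w j) = ∑ j ∈ s, f j * g j := by
  rw [dot_sum_left]
  refine Finset.sum_congr rfl fun i hi => ?_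
  rw [dot_sum_right]
  simp only [smul_dotProduct, dotProduct_smul, smul_eq_mul, hw, mul_ite,
    mul_one, mul_zero]
  rw [Finset.sum_ite_eq s i fun j => g j * f i, if_pos hi, mul_comm]

lemma w_inj (w : Fin n → (Fin n → ℝ))
    (hw : ∀ i j, w i ⬝ᵥ w j = if i = j then (1:ℝ) else 0) :
    Function.Injective w := by
  intro i j h
  by_contra hne
  have h1 := hw i j
  rw [if_neg hne, h] at h1
  have h2 := hw j j
  rw [if_pos rfl] at h2
  linarith [h1, h2]

lemma finrank_span_card (w : Fin n → (Fin n → ℝ))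
    (hw : ∀ i j, w i ⬝ᵥ w j = if i = j then (1:ℝ) else 0)
    (s : Finset (Fin n)) :
    finrank ℝ (span ℝ (w '' ↑s)) = s.card := by
  have li : LinearIndependent ℝ (fun j : (↑s : Set (Fin n)) => w j) := by
    rw [Fintype.linearIndependent_iff]
    intro g hg i
    have h := congrArg (fun y => w (i : Fin n) ⬝ᵥ y) hg
    simp only [dot_sum_right, dotProduct_smul, smul_eq_mul, hw,
      dotProduct_zero, mul_ite, mul_one, mul_zero, Subtype.coe_inj] at h
    rwa [Finset.sum_ite_eq Finset.univ i (fun j => g j), if_pos (Finset.mem_univ i)] at h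
  have h := finrank_span_eq_card li
  rw [← Set.image_eq_range] at h
  simpa using h

lemma exists_rep (w : Fin n → (Fin n → ℝ))
    (hw : ∀ i j, w i ⬝ᵥ w j = if i = j then (1:ℝ) else 0)
    (s : Finset (Fin n)) {x : Fin n → ℝ} (hx : x ∈ span ℝ (w '' ↑s)) :
    ∃ f : Fin n → ℝ, x = ∑ j ∈ s, f j • w j := by
  rw [← Finset.coe_image] at hx
  obtain ⟨f, hf⟩ := mem_span_finset.1 hx
  refine ⟨fun j => f (w j), ?_⟩
  rw [← hf.2, Finset.sum_image (fun a _ b _ h => w_inj w hw h)]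

lemma span_quad (M : Matrix (Fin n) (Fin n) ℝ) (w : Fin n → (Fin n → ℝ))
    (hw : ∀ i j, w i ⬝ᵥ w j = if i = j then (1:ℝ) else 0)
    (lam : Fin n → ℝ) (hMw : ∀ j, M *ᵥ w j = lam j • w j)
    (s : Finset (Fin n)) {x : Fin n → ℝ} (hx : x ∈ span ℝ (w '' ↑s)) :
    ∃ f : Fin n → ℝ, x ⬝ᵥ x = ∑ j ∈ s, f j ^ 2 ∧
      x ⬝ᵥ (M *ᵥ x) = ∑ j ∈ s, lam j * f j ^ 2 := by
  obtain ⟨f, rfl⟩ := exists_rep w hw s hx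
  refine ⟨f, ?_, ?_⟩
  · rw [dot_sum_sum w hw s f f]
    exact Finset.sum_congr rfl fun j _ => (sq (f j)).symm
  · have hM : M *ᵥ (∑ j ∈ s, f j • w j) = ∑ j ∈ s, (fun j => f j * lam j) j • w j := by
      rw [mulVec_sum]
      refine Finset.sum_congr rfl fun j _ => ?_
      rw [Matrix.mulVec_smul, hMw j, smul_smul]
    rw [hM, dot_sum_sum w hw s f (fun j => f j * lam j)]
    exact Finset.sum_congr rfl fun j _ => by ring


lemma eigen_data (A : Matrix (Fin n) (Fin n) ℝ) (hA : A.IsHermitian) :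
    ∃ w : Fin n → (Fin n → ℝ),
      (∀ i j, w i ⬝ᵥ w j = if i = j then (1:ℝ) else 0) ∧
      (∀ j, A *ᵥ w j = hA.eigenvalues j • w j) := by
  refine ⟨fun j => ⇑(hA.eigenvectorBasis j), ?_, fun j => hA.mulVec_eigenvectorBasis j⟩
  intro i j
  have h := (orthonormal_iff_ite.mp hA.eigenvectorBasis.orthonormal) i j
  simpa [PiLp.inner_apply, dotProduct, RCLike.inner_apply, conj_trivial, mul_comm] using h

lemma weyl (A B : Matrix (Fin n) (Fin n) ℝ) (hA : A.IsHermitian) (hB : B.IsHermitian)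
    (k : Fin n) :
    ∃ x : Fin n → ℝ, x ≠ 0 ∧
      hA.eigenvalues (Tuple.sort hA.eigenvalues k) * (x ⬝ᵥ x) ≤ x ⬝ᵥ (A *ᵥ x) ∧
      x ⬝ᵥ (B *ᵥ x) ≤ hB.eigenvalues (Tuple.sort hB.eigenvalues k) * (x ⬝ᵥ x) := by
  obtain ⟨wA, hwA, hMA⟩ := eigen_data A hA
  obtain ⟨wB, hwB, hMB⟩ := eigen_data B hB
  set σ := Tuple.sort hA.eigenvalues with hσ
  set τ := Tuple.sort hB.eigenvalues with hτ
  have hwA' : ∀ i j, (wA ∘ σ) i ⬝ᵥ (wA ∘ σ) j = if i = j then (1:ℝ) else 0 := by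
    intro i j
    simp only [Function.comp_apply, hwA, EmbeddingLike.apply_eq_iff_eq]
  have hwB' : ∀ i j, (wB ∘ τ) i ⬝ᵥ (wB ∘ τ) j = if i = j then (1:ℝ) else 0 := by
    intro i j
    simp only [Function.comp_apply, hwB, EmbeddingLike.apply_eq_iff_eq]
  set S := span ℝ ((wA ∘ σ) '' ↑(Finset.Ici k)) with hSdef
  set T := span ℝ ((wB ∘ τ) '' ↑(Finset.Iic k)) with hTdef
  have hS : finrank ℝ S = n - (k : ℕ) := by
    rw [hSdef, finrank_span_card _ hwA', Fin.card_Ici]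
  have hT : finrank ℝ T = (k : ℕ) + 1 := by
    rw [hTdef, finrank_span_card _ hwB', Fin.card_Iic]
  have hdim : finrank ℝ ↥(S ⊓ T) ≠ 0 := by
    have h1 := Submodule.finrank_sup_add_finrank_inf_eq S T
    have h2 : finrank ℝ ↥(S ⊔ T) ≤ finrank ℝ (Fin n → ℝ) := Submodule.finrank_le _
    rw [Module.finrank_fin_fun] at h2
    have hk := k.isLt
    omega
  have hne : S ⊓ T ≠ ⊥ := by
    intro hbot
    rw [hbot, finrank_bot] at hdim
    exact hdim rfl
  obtain ⟨x, hxST, hx0⟩ := (Submodule.ne_bot_iff _).1 hne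
  obtain ⟨hxS, hxT⟩ := Submodule.mem_inf.1 hxST
  obtain ⟨f, hf1, hf2⟩ := span_quad A (wA ∘ σ) hwA' (hA.eigenvalues ∘ σ)
    (fun j => hMA (σ j)) _ hxS
  obtain ⟨g, hg1, hg2⟩ := span_quad B (wB ∘ τ) hwB' (hB.eigenvalues ∘ τ)
    (fun j => hMB (τ j)) _ hxT
  refine ⟨x, hx0, ?_, ?_⟩
  · rw [hf2, hf1, Finset.mul_sum]
    refine Finset.sum_le_sum fun j hj => ?_
    have hmono : hA.eigenvalues (σ k) ≤ hA.eigenvalues (σ j) :=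
      Tuple.monotone_sort hA.eigenvalues (Finset.mem_Ici.1 hj)
    exact mul_le_mul_of_nonneg_right hmono (sq_nonneg _)
  · rw [hg2, hg1, Finset.mul_sum]
    refine Finset.sum_le_sum fun j hj => ?_
    have hmono : hB.eigenvalues (τ j) ≤ hB.eigenvalues (τ k) :=
      Tuple.monotone_sort hB.eigenvalues (Finset.mem_Iic.1 hj)
    exact mul_le_mul_of_nonneg_right hmono (sq_nonneg _)

end FopAux


/-- The special Lagrangian operator `F(M) = Σᵢ arctan(λᵢ(M))` on real symmetric matrices
(junk value `0` if `M` is not symmetric). -/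
noncomputable def Fop {n : ℕ} (M : Matrix (Fin n) (Fin n) ℝ) : ℝ :=
  if h : M.IsHermitian then ∑ i, Real.arctan (h.eigenvalues i) else 0

/-- `F` is monotone: if `A`, `B` are real symmetric and `B − A` is positive semidefinite then
`F(A) ≤ F(B)`; if moreover `B − A` is positive definite then `F(A) < F(B)`. -/
theorem Fop_monotone {n : ℕ} (hn : 0 < n) (A B : Matrix (Fin n) (Fin n) ℝ)
    (hA : A.IsHermitian) (hB : B.IsHermitian) :
    ((B - A).PosSemidef → Fop A ≤ Fop B) ∧ ((B - A).PosDef → Fop A < Fop B) := by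
  have eA : ∑ i, Real.arctan (hA.eigenvalues i)
      = ∑ i, Real.arctan (hA.eigenvalues (Tuple.sort hA.eigenvalues i)) :=
    (Equiv.sum_comp (Tuple.sort hA.eigenvalues) fun i => Real.arctan (hA.eigenvalues i)).symm
  have eB : ∑ i, Real.arctan (hB.eigenvalues i)
      = ∑ i, Real.arctan (hB.eigenvalues (Tuple.sort hB.eigenvalues i)) :=
    (Equiv.sum_comp (Tuple.sort hB.eigenvalues) fun i => Real.arctan (hB.eigenvalues i)).symm
  constructor
  · intro hP
    have hpt : ∀ x : Fin n → ℝ, x ⬝ᵥ (A *ᵥ x) ≤ x ⬝ᵥ (B *ᵥ x) := by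
      intro x
      have h := hP.dotProduct_mulVec_nonneg x
      rw [star_trivial, Matrix.sub_mulVec, dotProduct_sub] at h
      linarith
    have hev : ∀ k : Fin n, hA.eigenvalues (Tuple.sort hA.eigenvalues k)
        ≤ hB.eigenvalues (Tuple.sort hB.eigenvalues k) := by
      intro k
      obtain ⟨x, hx0, h1, h2⟩ := FopAux.weyl A B hA hB k
      have hd := FopAux.dot_self_pos hx0
      exact le_of_mul_le_mul_right (le_trans h1 (le_trans (hpt x) h2)) hd
    rw [Fop, dif_pos hA, Fop, dif_pos hB, eA, eB]
    exact Finset.sum_le_sum fun k _ => Real.arctan_strictMono.monotone (hev k)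
  · intro hP
    have hpt : ∀ x : Fin n → ℝ, x ≠ 0 → x ⬝ᵥ (A *ᵥ x) < x ⬝ᵥ (B *ᵥ x) := by
      intro x hx
      have h := hP.dotProduct_mulVec_pos hx
      rw [star_trivial, Matrix.sub_mulVec, dotProduct_sub] at h
      linarith
    have hev : ∀ k : Fin n, hA.eigenvalues (Tuple.sort hA.eigenvalues k)
        < hB.eigenvalues (Tuple.sort hB.eigenvalues k) := by
      intro k
      obtain ⟨x, hx0, h1, h2⟩ := FopAux.weyl A B hA hB k
      have hd := FopAux.dot_self_pos hx0
      exact (mul_lt_mul_iff_of_pos_right hd).1 (lt_of_le_of_lt h1 (lt_of_lt_of_le (hpt x hx0) h2))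
    have : Nonempty (Fin n) := ⟨⟨0, hn⟩⟩
    rw [Fop, dif_pos hA, Fop, dif_pos hB, eA, eB]
    exact Finset.sum_lt_sum_of_nonempty Finset.univ_nonempty
      fun k _ => Real.arctan_strictMono (hev k)
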